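/- arXiv:2101.10864 — 4 statements merged into one kernel-verified Lean document; each statement's English description precedes it below -/
import Mathlib

section
/- Let ξ, λ ∈ R and define A(t,x) = A(ξ(x − λt), e₁) ∈ SO₃(R) (the helical traveling wave). Then the columns Ω = Ae₁, u = Ae₂, v = Ae₃ satisfy: Ω ≡ e₁ is constant, r := (∇·Ω)Ω + (∇·u)u + (∇·v)v = 0, and δ := [(Ω·∇)u]·v + [(u·∇)v]·Ω + [(v·∇)Ω]·u = ξ, where all spatial derivatives are taken in the variable x (the fields being independent of y,z). -/
open Matrix Real

noncomputable section

/-- The antisymmetric cross-product matrix `[w]ₓ` of a vector `w ∈ ℝ³`. -/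
def crossMat (w : Fin 3 → ℝ) : Matrix (Fin 3) (Fin 3) ℝ :=
  !![0, -w 2, w 1; w 2, 0, -w 0; -w 1, w 0, 0]

/-- Rodrigues' formula: `A(θ,n) = I + sin θ [n]ₓ + (1 - cos θ) [n]ₓ²`. -/
def rodrigues (θ : ℝ) (n : Fin 3 → ℝ) : Matrix (Fin 3) (Fin 3) ℝ :=
  1 + Real.sin θ • crossMat n + (1 - Real.cos θ) • (crossMat n * crossMat n)

/-- The helical traveling wave `A(t,x) = A(ξ(x - λt), e₁)`. -/
def HW (ξ lam t x : ℝ) : Matrix (Fin 3) (Fin 3) ℝ :=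
  rodrigues (ξ * (x - lam * t)) ![1, 0, 0]

/-- The column `Ω = A e₁` of the helical wave. -/
def HWΩ (ξ lam t x : ℝ) : Fin 3 → ℝ := fun i => HW ξ lam t x i 0
/-- The column `u = A e₂` of the helical wave. -/
def HWu (ξ lam t x : ℝ) : Fin 3 → ℝ := fun i => HW ξ lam t x i 1
/-- The column `v = A e₃` of the helical wave. -/
def HWv (ξ lam t x : ℝ) : Fin 3 → ℝ := fun i => HW ξ lam t x i 2

/-- Since the fields depend only on the first spatial coordinate `x`, the
divergence of such a field is the `x`-derivative of its first component. -/
def divx (B : ℝ → ℝ → Fin 3 → ℝ) (t x : ℝ) : ℝ :=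
  deriv (fun y => B t y 0) x

/-- `(B·∇)C` for fields depending only on the first spatial coordinate. -/
def dirDerivx (B C : ℝ → ℝ → Fin 3 → ℝ) (t x : ℝ) : Fin 3 → ℝ :=
  fun i => B t x 0 * deriv (fun y => C t y i) x


lemma HW_eq (ξ lam t x : ℝ) :
    HW ξ lam t x = !![1, 0, 0; 0, Real.cos (ξ*(x - lam*t)), -Real.sin (ξ*(x - lam*t));
      0, Real.sin (ξ*(x - lam*t)), Real.cos (ξ*(x - lam*t))] := by
  unfold HW rodrigues crossMat
  ext i j
  fin_cases i <;> fin_cases j <;>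
    simp [Matrix.mul_apply, Fin.sum_univ_three, Matrix.one_apply, Matrix.vecHead, Matrix.vecTail] <;> ring

lemma deriv_arg (ξ lam t x : ℝ) :
    deriv (fun y => ξ * (y - lam * t)) x = ξ := by
  simp [deriv_const_mul_field]

lemma hderiv_cos (ξ lam t x : ℝ) :
    deriv (fun y => Real.cos (ξ * (y - lam * t))) x
      = -ξ * Real.sin (ξ * (x - lam * t)) := by
  have h : (fun y => Real.cos (ξ * (y - lam * t)))
      = Real.cos ∘ (fun y => ξ * (y - lam * t)) := rfl
  rw [h, deriv_comp _ Real.differentiable_cos.differentiableAt (by fun_prop),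
    Real.deriv_cos, deriv_arg]
  ring

lemma hderiv_sin (ξ lam t x : ℝ) :
    deriv (fun y => Real.sin (ξ * (y - lam * t))) x
      = ξ * Real.cos (ξ * (x - lam * t)) := by
  have h : (fun y => Real.sin (ξ * (y - lam * t)))
      = Real.sin ∘ (fun y => ξ * (y - lam * t)) := rfl
  rw [h, deriv_comp _ Real.differentiable_sin.differentiableAt (by fun_prop),
    Real.deriv_sin, deriv_arg]
  ring


theorem helical_wave_Omega_r_delta (ξ lam : ℝ) (t x : ℝ) :
    HWΩ ξ lam t x = ![1, 0, 0] ∧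
    (fun i => divx (HWΩ ξ lam) t x * HWΩ ξ lam t x i
        + divx (HWu ξ lam) t x * HWu ξ lam t x i
        + divx (HWv ξ lam) t x * HWv ξ lam t x i) = (0 : Fin 3 → ℝ) ∧
    (∑ i, dirDerivx (HWΩ ξ lam) (HWu ξ lam) t x i * HWv ξ lam t x i)
      + (∑ i, dirDerivx (HWu ξ lam) (HWv ξ lam) t x i * HWΩ ξ lam t x i)
      + (∑ i, dirDerivx (HWv ξ lam) (HWΩ ξ lam) t x i * HWu ξ lam t x i)
      = ξ := by
  have hΩ : HWΩ ξ lam t x = ![1, 0, 0] := by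
    ext i; fin_cases i <;> simp [HWΩ, HW_eq, Matrix.vecHead, Matrix.vecTail]
  refine ⟨hΩ, ?_, ?_⟩
  · ext i
    have d1 : divx (HWΩ ξ lam) t x = 0 := by
      simp [divx, HWΩ, HW_eq]
    have d2 : divx (HWu ξ lam) t x = 0 := by
      simp [divx, HWu, HW_eq]
    have d3 : divx (HWv ξ lam) t x = 0 := by
      simp [divx, HWv, HW_eq]
    simp [d1, d2, d3]
  · simp only [Fin.sum_univ_three, dirDerivx, HWΩ, HWu, HWv, HW_eq]
    simp [hderiv_cos, hderiv_sin]
    have := Real.sin_sq_add_cos_sq (ξ * (x - lam * t))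
    linear_combination ξ * this
end
end

section
/- Let ξ, ω ∈ R and define the milling-orbit field A(t,z) = A(−ωt, e₃) · A(ξz, e₁) ∈ SO₃(R). Then with Ω = Ae₁, u = Ae₂, v = Ae₃ (functions of t and z only), one has r := (∇·Ω)Ω + (∇·u)u + (∇·v)v = ξ(sin(ωt), cos(ωt), 0)ᵀ and δ := [(Ω·∇)u]·v + [(u·∇)v]·Ω + [(v·∇)Ω]·u = 0, where spatial derivatives act only through the z variable. -/
open Matrix Real

noncomputable section

/-- The milling-orbit field `A(t,z) = A(-ωt, e₃) · A(ξz, e₁)`. -/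
def MO (ξ ω t z : ℝ) : Matrix (Fin 3) (Fin 3) ℝ :=
  rodrigues (-ω * t) ![0, 0, 1] * rodrigues (ξ * z) ![1, 0, 0]

/-- The column `Ω = A e₁` of the milling orbit. -/
def MOΩ (ξ ω t z : ℝ) : Fin 3 → ℝ := fun i => MO ξ ω t z i 0
/-- The column `u = A e₂` of the milling orbit. -/
def MOu (ξ ω t z : ℝ) : Fin 3 → ℝ := fun i => MO ξ ω t z i 1
/-- The column `v = A e₃` of the milling orbit. -/
def MOv (ξ ω t z : ℝ) : Fin 3 → ℝ := fun i => MO ξ ω t z i 2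

/-- Since the fields depend only on the third spatial coordinate `z`, the
divergence of such a field is the `z`-derivative of its third component. -/
def divz (B : ℝ → ℝ → Fin 3 → ℝ) (t z : ℝ) : ℝ :=
  deriv (fun y => B t y 2) z

/-- `(B·∇)C` for fields depending only on the third spatial coordinate `z`. -/
def dirDerivz (B C : ℝ → ℝ → Fin 3 → ℝ) (t z : ℝ) : Fin 3 → ℝ :=
  fun i => B t z 2 * deriv (fun y => C t y i) z

lemma MO_eq (ξ ω t z : ℝ) : MO ξ ω t z =
    !![Real.cos (ω*t), Real.sin (ω*t) * Real.cos (ξ*z), -(Real.sin (ω*t) * Real.sin (ξ*z));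
       -Real.sin (ω*t), Real.cos (ω*t) * Real.cos (ξ*z), -(Real.cos (ω*t) * Real.sin (ξ*z));
       0, Real.sin (ξ*z), Real.cos (ξ*z)] := by
  ext i j
  fin_cases i <;> fin_cases j <;>
    simp [MO, rodrigues, crossMat, Matrix.mul_apply, Fin.sum_univ_three, Matrix.one_apply,
      Real.sin_neg, Real.cos_neg, neg_mul]

theorem milling_orbit_r_delta (ξ ω : ℝ) (t z : ℝ) :
    (fun i => divz (MOΩ ξ ω) t z * MOΩ ξ ω t z i
        + divz (MOu ξ ω) t z * MOu ξ ω t z i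
        + divz (MOv ξ ω) t z * MOv ξ ω t z i) =
      ![ξ * Real.sin (ω * t), ξ * Real.cos (ω * t), 0] ∧
    (∑ i, dirDerivz (MOΩ ξ ω) (MOu ξ ω) t z i * MOv ξ ω t z i)
      + (∑ i, dirDerivz (MOu ξ ω) (MOv ξ ω) t z i * MOΩ ξ ω t z i)
      + (∑ i, dirDerivz (MOv ξ ω) (MOΩ ξ ω) t z i * MOu ξ ω t z i)
      = 0 := by
  have hds : deriv (fun y => Real.sin (ξ*y)) z = ξ * Real.cos (ξ*z) := by
    have := (((hasDerivAt_id z).const_mul ξ).sin).deriv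
    simpa [mul_comm] using this
  have hdc : deriv (fun y => Real.cos (ξ*y)) z = -(ξ * Real.sin (ξ*z)) := by
    have := (((hasDerivAt_id z).const_mul ξ).cos).deriv
    simpa [mul_comm] using this
  have h1 := Real.sin_sq_add_cos_sq (ω*t)
  have h2 := Real.sin_sq_add_cos_sq (ξ*z)
  constructor
  · funext i
    fin_cases i <;>
      simp [divz, MOΩ, MOu, MOv, MO_eq, hds, hdc, deriv_const_mul_field', deriv.neg]
    · linear_combination (ξ * Real.sin (ω*t)) * h2
    · linear_combination (ξ * Real.cos (ω*t)) * h2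
    · ring
  · simp [dirDerivz, MOΩ, MOu, MOv, MO_eq, Fin.sum_univ_three, hds, hdc,
      deriv_const_mul_field', deriv.neg]
    ring
end
end

section
/- Fix ξ, ω ∈ R with ω = c₄ξ for a constant c₄. Then the pair (ρ, A) with ρ ≡ ρ₀ constant and A(t,x,y,z) = A(−ωt,e₃)·A(ξz,e₁) solves the SOHB system: ∂ₜρ + c₁∇ₓ·(ρ A e₁) = 0 and (∂ₜ + c₂(Ae₁)·∇ₓ)A + [(Ae₁)×(c₃∇ₓ log ρ + c₄ r) + c₄ δ (Ae₁)]ₓ A = 0, where r and δ are defined from the columns Ω = Ae₁, u = Ae₂, v = Ae₃ by r = (∇·Ω)Ω + (∇·u)u + (∇·v)v and δ = [(Ω·∇)u]·v + [(u·∇)v]·Ω + [(v·∇)Ω]·u. -/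
open Matrix Real

noncomputable section

/-- Partial derivative `∂ⱼ f` of a scalar field on `ℝ³`. -/
def pd (j : Fin 3) (f : (Fin 3 → ℝ) → ℝ) (x : Fin 3 → ℝ) : ℝ :=
  fderiv ℝ f x (Pi.single j 1)

/-- The cross product of two vectors in `ℝ³`. -/
def crossVec (a b : Fin 3 → ℝ) : Fin 3 → ℝ :=
  ![a 1 * b 2 - a 2 * b 1, a 2 * b 0 - a 0 * b 2, a 0 * b 1 - a 1 * b 0]

/-- Column `k` of a time-dependent matrix field (`k = 0,1,2` give `Ω, u, v`). -/
def col (A : ℝ → (Fin 3 → ℝ) → Matrix (Fin 3) (Fin 3) ℝ) (k : Fin 3)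
    (t : ℝ) (x : Fin 3 → ℝ) : Fin 3 → ℝ :=
  fun i => A t x i k

/-- The divergence of a time-dependent vector field on `ℝ³`. -/
def divg (B : ℝ → (Fin 3 → ℝ) → Fin 3 → ℝ) (t : ℝ) (x : Fin 3 → ℝ) : ℝ :=
  ∑ j, pd j (fun y => B t y j) x

/-- The directional derivative `(B·∇)C` of time-dependent vector fields. -/
def dirD (B C : ℝ → (Fin 3 → ℝ) → Fin 3 → ℝ) (t : ℝ) (x : Fin 3 → ℝ) :
    Fin 3 → ℝ :=
  fun i => ∑ j, B t x j * pd j (fun y => C t y i) x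

/-- The vector `r = (∇·Ω)Ω + (∇·u)u + (∇·v)v` built from the columns of `A`. -/
def rvec (A : ℝ → (Fin 3 → ℝ) → Matrix (Fin 3) (Fin 3) ℝ) (t : ℝ)
    (x : Fin 3 → ℝ) : Fin 3 → ℝ :=
  fun i => divg (col A 0) t x * col A 0 t x i + divg (col A 1) t x * col A 1 t x i
    + divg (col A 2) t x * col A 2 t x i

/-- The scalar `δ = [(Ω·∇)u]·v + [(u·∇)v]·Ω + [(v·∇)Ω]·u`. -/
def deltaS (A : ℝ → (Fin 3 → ℝ) → Matrix (Fin 3) (Fin 3) ℝ) (t : ℝ)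
    (x : Fin 3 → ℝ) : ℝ :=
  (∑ i, dirD (_root_.col A 0) (_root_.col A 1) t x i * _root_.col A 2 t x i)
    + (∑ i, dirD (_root_.col A 1) (_root_.col A 2) t x i * _root_.col A 0 t x i)
    + (∑ i, dirD (_root_.col A 2) (_root_.col A 0) t x i * _root_.col A 1 t x i)

/-- The instantaneous rotation vector
`w = Ω × (c₃ ∇ log ρ + c₄ r) + c₄ δ Ω` of the SOHB system. -/
def wvec (c₃ c₄ : ℝ) (ρ : ℝ → (Fin 3 → ℝ) → ℝ)
    (A : ℝ → (Fin 3 → ℝ) → Matrix (Fin 3) (Fin 3) ℝ) (t : ℝ)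
    (x : Fin 3 → ℝ) : Fin 3 → ℝ :=
  fun i =>
    crossVec (col A 0 t x)
      (fun j => c₃ * pd j (fun y => Real.log (ρ t y)) x + c₄ * rvec A t x j) i
    + c₄ * deltaS A t x * col A 0 t x i

/-- `(ρ, A)` solves the SOHB system. -/
def SolvesSOHB (c₁ c₂ c₃ c₄ : ℝ) (ρ : ℝ → (Fin 3 → ℝ) → ℝ)
    (A : ℝ → (Fin 3 → ℝ) → Matrix (Fin 3) (Fin 3) ℝ) : Prop :=
  (∀ t x, deriv (fun s => ρ s x) t
      + c₁ * ∑ j, pd j (fun y => ρ t y * A t y j 0) x = 0) ∧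
  (∀ t x i j, deriv (fun s => A s x i j) t
      + c₂ * (∑ k, A t x k 0 * pd k (fun y => A t y i j) x)
      + (crossMat (wvec c₃ c₄ ρ A t x) * A t x) i j = 0)

set_option linter.unusedTactic false
set_option linter.unreachableTactic false

/-- The explicit milling matrix `A(−ωt,e₃)·A(ξz,e₁)` with `θ = −ωt`, `φ = ξz`. -/
def Mmat (θ φ : ℝ) : Matrix (Fin 3) (Fin 3) ℝ :=
  !![Real.cos θ, -Real.sin θ * Real.cos φ, Real.sin θ * Real.sin φ;
     Real.sin θ, Real.cos θ * Real.cos φ, -Real.cos θ * Real.sin φ;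
     0, Real.sin φ, Real.cos φ]

/-- `∂M/∂φ`. -/
def Mphi (θ φ : ℝ) : Matrix (Fin 3) (Fin 3) ℝ :=
  !![0, Real.sin θ * Real.sin φ, Real.sin θ * Real.cos φ;
     0, -Real.cos θ * Real.sin φ, -Real.cos θ * Real.cos φ;
     0, Real.cos φ, -Real.sin φ]

/-- `∂M/∂θ`. -/
def Mtheta (θ φ : ℝ) : Matrix (Fin 3) (Fin 3) ℝ :=
  !![-Real.sin θ, -Real.cos θ * Real.cos φ, Real.cos θ * Real.sin φ;
     Real.cos θ, -Real.sin θ * Real.cos φ, Real.sin θ * Real.sin φ;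
     0, 0, 0]

lemma hasDerivAt_M_z (θ ξ z : ℝ) (i j : Fin 3) :
    HasDerivAt (fun u => Mmat θ (ξ * u) i j) (ξ * Mphi θ (ξ * z) i j) z := by
  have h : HasDerivAt (fun u : ℝ => ξ * u) ξ z := by
    simpa using (hasDerivAt_id z).const_mul ξ
  fin_cases i <;> fin_cases j <;>
    simp only [Mmat, Mphi, Matrix.cons_val', Matrix.cons_val_zero, Matrix.cons_val_one,
      Matrix.head_cons, Matrix.empty_val', Matrix.cons_val_fin_one, Matrix.head_fin_const,
      Matrix.of_apply, Fin.mk_one, Fin.mk_zero, Fin.reduceFinMk, Matrix.cons_val_two,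
      Matrix.vecHead, Matrix.vecTail]
  · exact (hasDerivAt_const z _).congr_deriv (by (try simp only [Function.comp_apply, Fin.succ_zero_eq_one, Matrix.cons_val_one, Matrix.head_cons, Matrix.cons_val_zero, Matrix.vecHead, Matrix.vecTail]); ring)
  · exact ((h.cos.const_mul (-Real.sin θ)).congr_deriv (by (try simp only [Function.comp_apply, Fin.succ_zero_eq_one, Matrix.cons_val_one, Matrix.head_cons, Matrix.cons_val_zero, Matrix.vecHead, Matrix.vecTail]); ring))
  · exact ((h.sin.const_mul (Real.sin θ)).congr_deriv (by (try simp only [Function.comp_apply, Fin.succ_zero_eq_one, Matrix.cons_val_one, Matrix.head_cons, Matrix.cons_val_zero, Matrix.vecHead, Matrix.vecTail]); ring))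
  · exact (hasDerivAt_const z _).congr_deriv (by (try simp only [Function.comp_apply, Fin.succ_zero_eq_one, Matrix.cons_val_one, Matrix.head_cons, Matrix.cons_val_zero, Matrix.vecHead, Matrix.vecTail]); ring)
  · exact ((h.cos.const_mul (Real.cos θ)).congr_deriv (by (try simp only [Function.comp_apply, Fin.succ_zero_eq_one, Matrix.cons_val_one, Matrix.head_cons, Matrix.cons_val_zero, Matrix.vecHead, Matrix.vecTail]); ring))
  · exact ((h.sin.const_mul (-Real.cos θ)).congr_deriv (by (try simp only [Function.comp_apply, Fin.succ_zero_eq_one, Matrix.cons_val_one, Matrix.head_cons, Matrix.cons_val_zero, Matrix.vecHead, Matrix.vecTail]); ring))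
  · exact (hasDerivAt_const z _).congr_deriv (by (try simp only [Function.comp_apply, Fin.succ_zero_eq_one, Matrix.cons_val_one, Matrix.head_cons, Matrix.cons_val_zero, Matrix.vecHead, Matrix.vecTail]); ring)
  · exact (h.sin.congr_deriv (by (try simp only [Function.comp_apply, Fin.succ_zero_eq_one, Matrix.cons_val_one, Matrix.head_cons, Matrix.cons_val_zero, Matrix.vecHead, Matrix.vecTail]); ring))
  · exact (h.cos.congr_deriv (by (try simp only [Function.comp_apply, Fin.succ_zero_eq_one, Matrix.cons_val_one, Matrix.head_cons, Matrix.cons_val_zero, Matrix.vecHead, Matrix.vecTail]); ring))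

lemma hasDerivAt_M_t (ω φ t : ℝ) (i j : Fin 3) :
    HasDerivAt (fun s => Mmat (-ω * s) φ i j) (-ω * Mtheta (-ω * t) φ i j) t := by
  have h : HasDerivAt (fun s : ℝ => -ω * s) (-ω) t := by
    simpa using (hasDerivAt_id t).const_mul (-ω)
  fin_cases i <;> fin_cases j <;>
    simp only [Mmat, Mtheta, Matrix.cons_val', Matrix.cons_val_zero, Matrix.cons_val_one,
      Matrix.head_cons, Matrix.empty_val', Matrix.cons_val_fin_one, Matrix.head_fin_const,
      Matrix.of_apply, Fin.mk_one, Fin.mk_zero, Fin.reduceFinMk, Matrix.cons_val_two,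
      Matrix.vecHead, Matrix.vecTail]
  · exact (h.cos.congr_deriv (by (try simp only [Function.comp_apply, Fin.succ_zero_eq_one, Matrix.cons_val_one, Matrix.head_cons, Matrix.cons_val_zero, Matrix.vecHead, Matrix.vecTail]); ring))
  · exact ((h.sin.neg.mul_const (Real.cos φ)).congr_deriv (by (try simp only [Function.comp_apply, Fin.succ_zero_eq_one, Matrix.cons_val_one, Matrix.head_cons, Matrix.cons_val_zero, Matrix.vecHead, Matrix.vecTail]); ring))
  · exact ((h.sin.mul_const (Real.sin φ)).congr_deriv (by (try simp only [Function.comp_apply, Fin.succ_zero_eq_one, Matrix.cons_val_one, Matrix.head_cons, Matrix.cons_val_zero, Matrix.vecHead, Matrix.vecTail]); ring))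
  · exact (h.sin.congr_deriv (by (try simp only [Function.comp_apply, Fin.succ_zero_eq_one, Matrix.cons_val_one, Matrix.head_cons, Matrix.cons_val_zero, Matrix.vecHead, Matrix.vecTail]); ring))
  · exact ((h.cos.mul_const (Real.cos φ)).congr_deriv (by (try simp only [Function.comp_apply, Fin.succ_zero_eq_one, Matrix.cons_val_one, Matrix.head_cons, Matrix.cons_val_zero, Matrix.vecHead, Matrix.vecTail]); ring))
  · exact ((h.cos.neg.mul_const (Real.sin φ)).congr_deriv (by (try simp only [Function.comp_apply, Fin.succ_zero_eq_one, Matrix.cons_val_one, Matrix.head_cons, Matrix.cons_val_zero, Matrix.vecHead, Matrix.vecTail]); ring))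
  · exact (hasDerivAt_const t _).congr_deriv (by (try simp only [Function.comp_apply, Fin.succ_zero_eq_one, Matrix.cons_val_one, Matrix.head_cons, Matrix.cons_val_zero, Matrix.vecHead, Matrix.vecTail]); ring)
  · exact (hasDerivAt_const t _).congr_deriv (by (try simp only [Function.comp_apply, Fin.succ_zero_eq_one, Matrix.cons_val_one, Matrix.head_cons, Matrix.cons_val_zero, Matrix.vecHead, Matrix.vecTail]); ring)
  · exact (hasDerivAt_const t _).congr_deriv (by (try simp only [Function.comp_apply, Fin.succ_zero_eq_one, Matrix.cons_val_one, Matrix.head_cons, Matrix.cons_val_zero, Matrix.vecHead, Matrix.vecTail]); ring)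

lemma rod_mul (θ φ : ℝ) :
    rodrigues θ ![0, 0, 1] * rodrigues φ ![1, 0, 0] = Mmat θ φ := by
  ext i j
  fin_cases i <;> fin_cases j <;>
    simp [rodrigues, crossMat, Mmat, Matrix.mul_apply, Fin.sum_univ_three,
      Matrix.one_apply] <;> ring

lemma pd_const (j : Fin 3) (x : Fin 3 → ℝ) (c : ℝ) : pd j (fun _ => c) x = 0 := by
  simp [pd]

lemma pd_comp2 {g : ℝ → ℝ} {g' : ℝ} (j : Fin 3) (x : Fin 3 → ℝ)
    (hg : HasDerivAt g g' (x 2)) :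
    pd j (fun y => g (y 2)) x = g' * (Pi.single j 1 : Fin 3 → ℝ) 2 := by
  have hproj : HasFDerivAt (fun y : Fin 3 → ℝ => y 2)
      (ContinuousLinearMap.proj 2 : (Fin 3 → ℝ) →L[ℝ] ℝ) x :=
    (ContinuousLinearMap.proj 2 : (Fin 3 → ℝ) →L[ℝ] ℝ).hasFDerivAt
  have h := hg.comp_hasFDerivAt x hproj
  rw [pd, (show (fun y : Fin 3 → ℝ => g (y 2)) = g ∘ fun y => y 2 from rfl), h.fderiv]
  simp [mul_comm]

theorem milling_orbit_solves_SOHB (c₁ c₂ c₃ c₄ ξ ω ρ₀ : ℝ)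
    (hρ₀ : 0 < ρ₀) (hω : ω = c₄ * ξ) :
    SolvesSOHB c₁ c₂ c₃ c₄ (fun _ _ => ρ₀)
      (fun t x => rodrigues (-ω * t) ![0, 0, 1] *
        rodrigues (ξ * x 2) ![1, 0, 0]) := by
  subst hω
  have hA : (fun t x => rodrigues (-(c₄ * ξ) * t) ![0, 0, 1] *
        rodrigues (ξ * x 2) ![1, 0, 0])
      = fun (t : ℝ) (x : Fin 3 → ℝ) => Mmat (-(c₄ * ξ) * t) (ξ * x 2) := by
    funext t x; exact rod_mul _ _
  rw [hA]
  have hpd : ∀ (t : ℝ) (x : Fin 3 → ℝ) (k a b : Fin 3),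
      pd k (fun y => Mmat (-(c₄ * ξ) * t) (ξ * y 2) a b) x
        = ξ * Mphi (-(c₄ * ξ) * t) (ξ * x 2) a b * (Pi.single k 1 : Fin 3 → ℝ) 2 :=
    fun t x k a b => pd_comp2 k x (hasDerivAt_M_z (-(c₄ * ξ) * t) ξ (x 2) a b)
  constructor
  · intro t x
    have hp : ∀ k a : Fin 3,
        pd k (fun y => ρ₀ * Mmat (-(c₄ * ξ) * t) (ξ * y 2) a 0) x = 0 := by
      intro k a
      rw [pd_comp2 k x ((hasDerivAt_M_z (-(c₄ * ξ) * t) ξ (x 2) a 0).const_mul ρ₀)]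
      have hz : Mphi (-(c₄ * ξ) * t) (ξ * x 2) a 0 = 0 := by
        fin_cases a <;> simp [Mphi, Matrix.vecHead, Matrix.vecTail]
      rw [hz]; ring
    simp only [deriv_const', Fin.sum_univ_three, hp]
    ring
  · intro t x i j
    have hw : wvec c₃ c₄ (fun _ _ => ρ₀)
        (fun (t : ℝ) (x : Fin 3 → ℝ) => Mmat (-(c₄ * ξ) * t) (ξ * x 2)) t x
        = ![0, 0, c₄ * ξ] := by
      funext n
      simp only [wvec, crossVec, rvec, divg, dirD, deltaS, _root_.col,
        Fin.sum_univ_three, hpd, pd_const]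
      fin_cases n <;>
        simp [Mmat, Mphi, Matrix.vecHead, Matrix.vecTail, Pi.single_apply]
      · ring
      · ring
      · linear_combination (c₄ * ξ * (Real.sin (ξ * x 2)) ^ 2 + c₄ * ξ * (Real.cos (ξ * x 2)) ^ 2)
            * Real.sin_sq_add_cos_sq (c₄ * ξ * t)
          + c₄ * ξ * Real.sin_sq_add_cos_sq (ξ * x 2)
    have hdt : deriv (fun s => Mmat (-(c₄ * ξ) * s) (ξ * x 2) i j) t
        = -(c₄ * ξ) * Mtheta (-(c₄ * ξ) * t) (ξ * x 2) i j :=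
      (hasDerivAt_M_t (c₄ * ξ) (ξ * x 2) t i j).deriv
    simp only [hdt, hw, Fin.sum_univ_three, hpd]
    fin_cases i <;> fin_cases j <;>
      simp [Mmat, Mphi, Mtheta, crossMat, Matrix.mul_apply, Fin.sum_univ_three,
        Pi.single_apply, Matrix.vecHead, Matrix.vecTail] <;> ring

end
end

section
/- Let 𝔸 : D → SO₃(R) be a measurable field on a bounded domain D ⊂ R^3, ρ the uniform probability density on D, and define GOP(ρ,𝔸) = (1/2)(c₁/c₀)² ∬_{D×D} 𝔸(x)·𝔸(x̃) ρ(x)ρ(x̃) dx dx̃ + 1/4 with A·B = (1/2)Tr(AᵀB). If 𝔸(x) = A(ξz, e₁) (the perpendicular twist, z the third coordinate of x) on D = [0,L]³ with ξ = 2πn/L for a nonzero integer n, then GOP = (1/4)(c₁/c₀)² + 1/4. If instead 𝔸 is constant, then GOP = (3/4)(c₁/c₀)² + 1/4. -/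
open Matrix Real MeasureTheory

noncomputable section

/-- The inner product `A · B = (1/2) Tr(Aᵀ B)` on `3 × 3` real matrices. -/
def matInner (A B : Matrix (Fin 3) (Fin 3) ℝ) : ℝ :=
  (1 / 2) * Matrix.trace (Aᵀ * B)

/-- The cube `[0,L]³ ⊂ ℝ³`. -/
def box (L : ℝ) : Set (Fin 3 → ℝ) := Set.Icc 0 (fun _ => L)

/-- The global order parameter of a body-orientation field `𝔸` on `[0,L]³`,
with respect to the uniform density `ρ = 1/L³` and alignment ratio `c₁/c₀`. -/
def GOP (ratio L : ℝ) (𝔸 : (Fin 3 → ℝ) → Matrix (Fin 3) (Fin 3) ℝ) : ℝ :=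
  (1 / 2) * ratio ^ 2 *
    (∫ x in box L, ∫ y in box L,
      matInner (𝔸 x) (𝔸 y) * (1 / L ^ 3) * (1 / L ^ 3)) + 1 / 4

lemma matInner_rod (a b : ℝ) :
    matInner (rodrigues a ![1,0,0]) (rodrigues b ![1,0,0]) =
      1/2 + Real.cos a * Real.cos b + Real.sin a * Real.sin b := by
  simp [matInner, rodrigues, crossMat, Matrix.trace_fin_three, Matrix.mul_apply,
    Fin.sum_univ_three, Matrix.transpose_apply, Matrix.one_apply, Matrix.vecHead,
    Matrix.vecTail, Matrix.transpose]
  ring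

lemma volume_box_toReal {L : ℝ} (hL : 0 < L) : (volume (box L)).toReal = L ^ 3 := by
  have h := Real.volume_Icc_pi_toReal (a := (0 : Fin 3 → ℝ)) (b := fun _ => L)
    (fun _ => hL.le)
  rw [box, h, Fin.prod_univ_three]
  simp only [Pi.zero_apply, sub_zero]
  ring

lemma integral_box_third (L : ℝ) (f : ℝ → ℝ) :
    ∫ x in box L, f (x 2) =
      ((volume (Set.Icc (0:ℝ) L)).toReal) ^ 2 * ∫ z in Set.Icc (0:ℝ) L, f z := by
  have hbox : MeasurableSet (box L) := measurableSet_Icc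
  set g : Fin 3 → ℝ → ℝ := ![fun _ => 1, fun _ => 1, f] with hg
  have key : ∫ x in box L, f (x 2) =
      ∫ x : Fin 3 → ℝ, ∏ i : Fin 3,
        (Set.Icc (0:ℝ) L).indicator (g i) (x i) := by
    rw [← integral_indicator hbox]
    congr 1; funext x
    by_cases hx : x ∈ box L
    · have hi : ∀ i, x i ∈ Set.Icc (0:ℝ) L := fun i => ⟨hx.1 i, hx.2 i⟩
      rw [Set.indicator_of_mem hx]
      simp [hg, Fin.prod_univ_three, Set.indicator_of_mem (hi _)]
    · obtain ⟨i, hi⟩ : ∃ i, x i ∉ Set.Icc (0:ℝ) L := by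
        by_contra h
        push_neg at h
        exact hx ⟨fun i => (h i).1, fun i => (h i).2⟩
      rw [Set.indicator_of_notMem hx, Finset.prod_eq_zero (Finset.mem_univ i)]
      simp [Set.indicator_of_notMem hi]
  rw [key, MeasureTheory.integral_fintype_prod_volume_eq_prod, Fin.prod_univ_three]
  simp only [hg, Matrix.cons_val_zero, Matrix.cons_val_one, Matrix.head_cons,
    Matrix.cons_val_two, Matrix.tail_cons,
    MeasureTheory.integral_indicator (measurableSet_Icc (a := (0:ℝ)) (b := L)),
    MeasureTheory.setIntegral_const, MeasureTheory.measureReal_def, smul_eq_mul, mul_one]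
  ring

lemma sin_xiL (L : ℝ) (hL : L ≠ 0) (n : ℤ) (ξ : ℝ) (hξ : ξ = 2 * Real.pi * n / L) :
    Real.sin (ξ * L) = 0 := by
  have : ξ * L = (2 * n : ℤ) * Real.pi := by
    rw [hξ, div_mul_cancel₀ _ hL]; push_cast; ring
  rw [this, Real.sin_int_mul_pi]

lemma cos_xiL (L : ℝ) (hL : L ≠ 0) (n : ℤ) (ξ : ℝ) (hξ : ξ = 2 * Real.pi * n / L) :
    Real.cos (ξ * L) = 1 := by
  have : ξ * L = (n : ℝ) * (2 * Real.pi) := by rw [hξ, div_mul_cancel₀ _ hL]; ring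
  rw [this, Real.cos_int_mul_two_pi]

lemma integral_Icc_cos (L ξ : ℝ) (hξ : ξ ≠ 0) (h0 : Real.sin (ξ * L) = 0) :
    ∫ z in Set.Icc (0:ℝ) L, Real.cos (ξ * z) = 0 := by
  rcases le_or_gt 0 L with h | h
  · rw [MeasureTheory.integral_Icc_eq_integral_Ioc,
      ← intervalIntegral.integral_of_le h,
      intervalIntegral.integral_comp_mul_left _ hξ]
    simp [integral_cos, h0]
  · rw [Set.Icc_eq_empty (by linarith)]; simp

lemma integral_Icc_sin (L ξ : ℝ) (hξ : ξ ≠ 0) (h1 : Real.cos (ξ * L) = 1) :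
    ∫ z in Set.Icc (0:ℝ) L, Real.sin (ξ * z) = 0 := by
  rcases le_or_gt 0 L with h | h
  · rw [MeasureTheory.integral_Icc_eq_integral_Ioc,
      ← intervalIntegral.integral_of_le h,
      intervalIntegral.integral_comp_mul_left _ hξ]
    simp [integral_sin, h1]
  · rw [Set.Icc_eq_empty (by linarith)]; simp

lemma integral_box_affine (L ξ : ℝ) (hL : 0 < L)
    (hcos : ∫ z in Set.Icc (0:ℝ) L, Real.cos (ξ * z) = 0)
    (hsin : ∫ z in Set.Icc (0:ℝ) L, Real.sin (ξ * z) = 0) (a b c : ℝ) :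
    ∫ x in box L, (a + b * Real.cos (ξ * x 2) + c * Real.sin (ξ * x 2)) = a * L ^ 3 := by
  have hcomp : IsCompact (box L) := isCompact_Icc
  have hfin : volume (box L) ≠ ⊤ := hcomp.measure_lt_top.ne
  have ccos : Continuous fun x : Fin 3 → ℝ => Real.cos (ξ * x 2) :=
    Real.continuous_cos.comp (continuous_const.mul (continuous_apply 2))
  have csin : Continuous fun x : Fin 3 → ℝ => Real.sin (ξ * x 2) :=
    Real.continuous_sin.comp (continuous_const.mul (continuous_apply 2))
  have icos : IntegrableOn (fun x : Fin 3 → ℝ => b * Real.cos (ξ * x 2)) (box L) :=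
    ((ccos.integrableOn_Icc).const_mul b)
  have isin : IntegrableOn (fun x : Fin 3 → ℝ => c * Real.sin (ξ * x 2)) (box L) :=
    ((csin.integrableOn_Icc).const_mul c)
  have iconst : IntegrableOn (fun _ : Fin 3 → ℝ => a) (box L) :=
    integrableOn_const hfin (by simp)
  have e1 : ∫ x in box L, (a + b * Real.cos (ξ * x 2) + c * Real.sin (ξ * x 2)) =
      (∫ x in box L, (a + b * Real.cos (ξ * x 2))) +
        ∫ x in box L, c * Real.sin (ξ * x 2) :=
    MeasureTheory.integral_add (iconst.add icos) isin
  have e2 : ∫ x in box L, (a + b * Real.cos (ξ * x 2)) =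
      (∫ x in box L, a) + ∫ x in box L, b * Real.cos (ξ * x 2) :=
    MeasureTheory.integral_add iconst icos
  rw [e1, e2, MeasureTheory.integral_const_mul, MeasureTheory.integral_const_mul,
    integral_box_third L (fun z => Real.cos (ξ * z)),
    integral_box_third L (fun z => Real.sin (ξ * z)), hcos, hsin,
    MeasureTheory.setIntegral_const, MeasureTheory.measureReal_def, volume_box_toReal hL]
  simp [smul_eq_mul, mul_comm]

theorem GOP_twist_and_flocking (ratio L : ℝ) (hL : 0 < L)
    (hratio : ratio ∈ Set.Ioc (0 : ℝ) 1) (n : ℤ) (hn : n ≠ 0) (ξ : ℝ)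
    (hξ : ξ = 2 * Real.pi * n / L) :
    GOP ratio L (fun x => rodrigues (ξ * x 2) ![1, 0, 0]) =
      (1 / 4) * ratio ^ 2 + 1 / 4 ∧
    ∀ A₀ : Matrix (Fin 3) (Fin 3) ℝ, A₀ * A₀ᵀ = 1 → A₀.det = 1 →
      GOP ratio L (fun _ => A₀) = (3 / 4) * ratio ^ 2 + 1 / 4 := by
  have hLne : L ≠ 0 := hL.ne'
  have hξne : ξ ≠ 0 := by
    rw [hξ]
    have : (n : ℝ) ≠ 0 := Int.cast_ne_zero.2 hn
    positivity
  have hcos := integral_Icc_cos L ξ hξne (sin_xiL L hLne n ξ hξ)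
  have hsin := integral_Icc_sin L ξ hξne (cos_xiL L hLne n ξ hξ)
  have hcomp : IsCompact (box L) := isCompact_Icc
  constructor
  · unfold GOP
    have hinner : ∀ x : Fin 3 → ℝ,
        (∫ y in box L, matInner (rodrigues (ξ * x 2) ![1,0,0])
          (rodrigues (ξ * y 2) ![1,0,0]) * (1 / L ^ 3) * (1 / L ^ 3)) =
        (1 / L ^ 3 * (1 / L ^ 3) / 2) * L ^ 3 := by
      intro x
      rw [show (fun y : Fin 3 → ℝ => matInner (rodrigues (ξ * x 2) ![1,0,0])
            (rodrigues (ξ * y 2) ![1,0,0]) * (1 / L ^ 3) * (1 / L ^ 3)) =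
          fun y : Fin 3 → ℝ =>
            (1 / L ^ 3 * (1 / L ^ 3) / 2) +
            (1 / L ^ 3 * (1 / L ^ 3) * Real.cos (ξ * x 2)) * Real.cos (ξ * y 2) +
            (1 / L ^ 3 * (1 / L ^ 3) * Real.sin (ξ * x 2)) * Real.sin (ξ * y 2) from
          funext fun y => by rw [matInner_rod]; ring]
      exact integral_box_affine L ξ hL hcos hsin _ _ _
    have : (∫ x in box L, ∫ y in box L, matInner (rodrigues (ξ * x 2) ![1,0,0])
          (rodrigues (ξ * y 2) ![1,0,0]) * (1 / L ^ 3) * (1 / L ^ 3)) =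
        (1 / L ^ 3 * (1 / L ^ 3) / 2) * L ^ 3 * L ^ 3 := by
      rw [show (fun x : Fin 3 → ℝ => ∫ y in box L,
            matInner (rodrigues (ξ * x 2) ![1,0,0])
              (rodrigues (ξ * y 2) ![1,0,0]) * (1 / L ^ 3) * (1 / L ^ 3)) =
          fun _ : Fin 3 → ℝ => (1 / L ^ 3 * (1 / L ^ 3) / 2) * L ^ 3 from
          funext fun x => hinner x]
      rw [MeasureTheory.setIntegral_const, MeasureTheory.measureReal_def, volume_box_toReal hL, smul_eq_mul]
      ring
    rw [this]
    field_simp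
    ring
  · intro A₀ h1 _
    have h2 : A₀ᵀ * A₀ = 1 := mul_eq_one_comm.mp h1
    have hm : matInner A₀ A₀ = 3 / 2 := by
      simp [matInner, h2, Matrix.trace_one]
      norm_num
    unfold GOP
    rw [show (fun x : Fin 3 → ℝ => ∫ y in box L,
          matInner A₀ A₀ * (1 / L ^ 3) * (1 / L ^ 3)) =
        fun _ : Fin 3 → ℝ => (volume (box L)).toReal •
          (matInner A₀ A₀ * (1 / L ^ 3) * (1 / L ^ 3)) from
        funext fun x => MeasureTheory.setIntegral_const _]
    rw [MeasureTheory.setIntegral_const, MeasureTheory.measureReal_def, volume_box_toReal hL, hm, smul_smul, smul_eq_mul]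
    field_simp
    ring
end
end
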